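/- Let L ≥ −1/2 be an integer or half-integer and (η_n)_{n≥0} a sequence of reals with √η_n = n − L + O(1/n) (η_n > 0 for large n). Then the infinite product G(λ) := −∏_{n<L}(η_n − λ) · ∏_{n=L}π(η_n − λ) · ∏_{n>L}(η_n − λ)/(n−L)² converges locally uniformly on ℂ and defines an entire function whose zero set is exactly {η_n : n ≥ 0}. -/

import Mathlib

open Real Filter Topology

private lemma auxP_prod_sub_one (s : Finset ℕ) (a : ℕ → ℂ) (u : ℕ → ℝ)
    (h : ∀ n ∈ s, ‖a n - 1‖ ≤ u n) (h0 : ∀ n ∈ s, 0 ≤ u n) :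
    ‖(∏ n ∈ s, a n) - 1‖ ≤ (∏ n ∈ s, (1 + u n)) - 1 := by
  induction s using Finset.cons_induction with
  | empty => simp
  | cons i t hit ih =>
    rw [Finset.prod_cons, Finset.prod_cons]
    have hui : 0 ≤ u i := h0 i (Finset.mem_cons_self i t)
    have hai : ‖a i‖ ≤ 1 + u i := by
      calc ‖a i‖ = ‖(a i - 1) + 1‖ := by ring_nf
        _ ≤ ‖a i - 1‖ + ‖(1 : ℂ)‖ := norm_add_le _ _
        _ ≤ 1 + u i := by
            have := h i (Finset.mem_cons_self i t); simp only [norm_one]; linarith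
    have h1 : (1:ℝ) ≤ ∏ n ∈ t, (1 + u n) := by
      calc (1:ℝ) = ∏ _n ∈ t, (1:ℝ) := by simp
        _ ≤ ∏ n ∈ t, (1 + u n) := by
            refine Finset.prod_le_prod (fun n _ => by norm_num) fun n hn => ?_
            linarith [h0 n (Finset.mem_cons_of_mem hn)]
    have ih' := ih (fun n hn => h n (Finset.mem_cons_of_mem hn))
      (fun n hn => h0 n (Finset.mem_cons_of_mem hn))
    calc ‖a i * ∏ n ∈ t, a n - 1‖
        = ‖a i * ((∏ n ∈ t, a n) - 1) + (a i - 1)‖ := by ring_nf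
      _ ≤ ‖a i * ((∏ n ∈ t, a n) - 1)‖ + ‖a i - 1‖ := norm_add_le _ _
      _ = ‖a i‖ * ‖(∏ n ∈ t, a n) - 1‖ + ‖a i - 1‖ := by rw [norm_mul]
      _ ≤ (1 + u i) * ((∏ n ∈ t, (1 + u n)) - 1) + u i := by
          have := h i (Finset.mem_cons_self i t)
          have hmul := mul_le_mul hai ih' (norm_nonneg _) (by linarith)
          linarith
      _ = (1 + u i) * ∏ n ∈ t, (1 + u n) - 1 := by ring

private lemma auxP_prod_le_exp (s : Finset ℕ) (u : ℕ → ℝ) (h0 : ∀ n ∈ s, 0 ≤ u n) :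
    (∏ n ∈ s, (1 + u n)) ≤ Real.exp (∑ n ∈ s, u n) := by
  rw [Real.exp_sum]
  refine Finset.prod_le_prod (fun n hn => by linarith [h0 n hn]) fun n hn => ?_
  linarith [Real.add_one_le_exp (u n)]

private lemma auxP_prod_sub_one_exp (s : Finset ℕ) (a : ℕ → ℂ) (u : ℕ → ℝ)
    (h : ∀ n ∈ s, ‖a n - 1‖ ≤ u n) (h0 : ∀ n ∈ s, 0 ≤ u n) :
    ‖(∏ n ∈ s, a n) - 1‖ ≤ Real.exp (∑ n ∈ s, u n) - 1 := by
  have := auxP_prod_sub_one s a u h h0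
  have := auxP_prod_le_exp s u h0
  linarith

private lemma auxP_norm_prod_le (s : Finset ℕ) (a : ℕ → ℂ) (u : ℕ → ℝ)
    (h : ∀ n ∈ s, ‖a n - 1‖ ≤ u n) (h0 : ∀ n ∈ s, 0 ≤ u n) :
    ‖∏ n ∈ s, a n‖ ≤ Real.exp (∑ n ∈ s, u n) := by
  have h1 := auxP_prod_sub_one_exp s a u h h0
  have h2 : ‖∏ n ∈ s, a n‖ - ‖(1:ℂ)‖ ≤ ‖(∏ n ∈ s, a n) - 1‖ := norm_sub_norm_le _ _
  simp only [norm_one] at h2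
  linarith

private lemma auxP_sum_Ico_le_tail (v : ℕ → ℝ) (hv : Summable v) (hv0 : ∀ n, 0 ≤ v n)
    (N M : ℕ) : ∑ n ∈ Finset.Ico N M, v n ≤ ∑' k, v (k + N) := by
  rw [Finset.sum_Ico_eq_sum_range]
  have hsub : Summable fun k => v (k + N) := (summable_nat_add_iff N).mpr hv
  calc ∑ i ∈ Finset.range (M - N), v (N + i)
      = ∑ i ∈ Finset.range (M - N), v (i + N) := by
        refine Finset.sum_congr rfl fun i _ => by rw [Nat.add_comm]
    _ ≤ ∑' k, v (k + N) := Summable.sum_le_tsum _ (fun k _ => hv0 _) hsub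

private lemma auxP_cauchy (f : ℕ → ℂ → ℂ) (v : ℕ → ℝ) (hv : Summable v) (hv0 : ∀ n, 0 ≤ v n)
    (N₁ : ℕ) (K : Set ℂ) (hK : IsCompact K)
    (hcont : ∀ n, Continuous (f n))
    (hb : ∀ n, N₁ ≤ n → ∀ z ∈ K, ‖f n z - 1‖ ≤ v n) :
    UniformCauchySeqOn (fun N z => ∏ n ∈ Finset.range N, f n z) atTop K := by
  set t : ℕ → ℝ := fun N => ∑' k, v (k + N) with ht
  have htail : ∀ N M : ℕ, ∑ n ∈ Finset.Ico N M, v n ≤ t N :=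
    fun N M => auxP_sum_Ico_le_tail v hv hv0 N M
  obtain ⟨A, hA⟩ := hK.exists_bound_of_continuousOn
    (Continuous.continuousOn (continuous_finset_prod (Finset.range N₁) fun n _ => hcont n))
  set A' : ℝ := max A 0 with hA'
  have hA'0 : 0 ≤ A' := le_max_right _ _
  have hPbound : ∀ N, N₁ ≤ N → ∀ z ∈ K,
      ‖∏ n ∈ Finset.range N, f n z‖ ≤ A' * Real.exp (t N₁) := by
    intro N hN z hz
    rw [← Finset.prod_range_mul_prod_Ico _ hN, norm_mul]
    have h1 : ‖∏ n ∈ Finset.range N₁, f n z‖ ≤ A' := (hA z hz).trans (le_max_left _ _)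
    have h2 : ‖∏ n ∈ Finset.Ico N₁ N, f n z‖ ≤ Real.exp (∑ n ∈ Finset.Ico N₁ N, v n) :=
      auxP_norm_prod_le _ _ _ (fun n hn => hb n (Finset.mem_Ico.mp hn).1 z hz)
        (fun n _ => hv0 n)
    have h3 : Real.exp (∑ n ∈ Finset.Ico N₁ N, v n) ≤ Real.exp (t N₁) :=
      Real.exp_le_exp.mpr (htail _ _)
    exact mul_le_mul h1 (h2.trans h3) (norm_nonneg _) hA'0
  have hd : ∀ N M : ℕ, N₁ ≤ N → N ≤ M → ∀ z ∈ K,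
      dist (∏ n ∈ Finset.range M, f n z) (∏ n ∈ Finset.range N, f n z)
        ≤ (A' * Real.exp (t N₁)) * (Real.exp (t N) - 1) := by
    intro N M hN hNM z hz
    rw [dist_eq_norm, ← Finset.prod_range_mul_prod_Ico _ hNM]
    have heq : (∏ n ∈ Finset.range N, f n z) * (∏ n ∈ Finset.Ico N M, f n z)
        - ∏ n ∈ Finset.range N, f n z
        = (∏ n ∈ Finset.range N, f n z) * ((∏ n ∈ Finset.Ico N M, f n z) - 1) := by ring
    rw [heq, norm_mul]
    have h2 : ‖(∏ n ∈ Finset.Ico N M, f n z) - 1‖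
        ≤ Real.exp (∑ n ∈ Finset.Ico N M, v n) - 1 :=
      auxP_prod_sub_one_exp _ _ _ (fun n hn => hb n (le_trans hN (Finset.mem_Ico.mp hn).1) z hz)
        (fun n _ => hv0 n)
    have h3 : Real.exp (∑ n ∈ Finset.Ico N M, v n) - 1 ≤ Real.exp (t N) - 1 := by
      have := Real.exp_le_exp.mpr (htail N M); linarith
    refine mul_le_mul (hPbound N hN z hz) (h2.trans h3) (norm_nonneg _) ?_
    positivity
  rw [Metric.uniformCauchySeqOn_iff]
  intro ε hε
  have h0 : Tendsto t atTop (𝓝 0) := tendsto_sum_nat_add v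
  have hφ : Tendsto (fun N => (A' * Real.exp (t N₁)) * (Real.exp (t N) - 1)) atTop (𝓝 0) := by
    have h1 : Tendsto (fun N => Real.exp (t N) - 1) atTop (𝓝 0) := by
      have := (Real.continuous_exp.tendsto 0).comp h0
      simpa using this.sub_const 1
    simpa using h1.const_mul (A' * Real.exp (t N₁))
  obtain ⟨N₂, hN₂⟩ := eventually_atTop.mp (hφ.eventually (gt_mem_nhds hε))
  refine ⟨max N₂ N₁, fun m hm n hn z hz => ?_⟩
  rcases le_total n m with hnm | hmn
  · exact lt_of_le_of_lt
      (hd n m (le_trans (le_max_right _ _) hn) hnm z hz)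
      (hN₂ n (le_trans (le_max_left _ _) hn))
  · rw [dist_comm]
    exact lt_of_le_of_lt
      (hd m n (le_trans (le_max_right _ _) hm) hmn z hz)
      (hN₂ m (le_trans (le_max_left _ _) hm))

private lemma auxP_ne_zero (f : ℕ → ℂ → ℂ) (v : ℕ → ℝ) (hv : Summable v) (hv0 : ∀ n, 0 ≤ v n)
    (N₁ : ℕ) (z : ℂ) (hb : ∀ n, N₁ ≤ n → ‖f n z - 1‖ ≤ v n)
    (hnz : ∀ n, f n z ≠ 0) (l : ℂ)
    (hl : Tendsto (fun N => ∏ n ∈ Finset.range N, f n z) atTop (𝓝 l)) : l ≠ 0 := by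
  have h0 : Tendsto (fun N => ∑' k, v (k + N)) atTop (𝓝 0) := tendsto_sum_nat_add v
  obtain ⟨N₂', hN₂'⟩ := eventually_atTop.mp
    (h0.eventually (gt_mem_nhds (by norm_num : (0:ℝ) < 1/4)))
  set N₂ : ℕ := max N₂' N₁ with hN₂def
  have htail : ∑' k, v (k + N₂) < 1/4 := hN₂' N₂ (le_max_left _ _)
  have hexp : Real.exp (1/4) ≤ 4/3 := by
    have h1 : (3/4 : ℝ) ≤ (Real.exp (1/4))⁻¹ := by
      rw [← Real.exp_neg]; linarith [Real.add_one_le_exp (-(1/4) : ℝ)]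
    have h2 := Real.exp_pos ((1/4 : ℝ))
    have h3 : (3/4 : ℝ) * Real.exp (1/4) ≤ 1 :=
      calc (3/4 : ℝ) * Real.exp (1/4) ≤ (Real.exp (1/4))⁻¹ * Real.exp (1/4) :=
            mul_le_mul_of_nonneg_right h1 h2.le
        _ = 1 := inv_mul_cancel₀ h2.ne'
    linarith
  have hPne : (∏ n ∈ Finset.range N₂, f n z) ≠ 0 :=
    Finset.prod_ne_zero_iff.mpr fun n _ => hnz n
  set c : ℝ := ‖∏ n ∈ Finset.range N₂, f n z‖ * (2/3) with hc
  have hcpos : 0 < c := by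
    have := norm_pos_iff.mpr hPne
    positivity
  have hev : ∀ᶠ M in atTop, c ≤ ‖∏ n ∈ Finset.range M, f n z‖ := by
    rw [eventually_atTop]
    refine ⟨N₂, fun M hM => ?_⟩
    rw [← Finset.prod_range_mul_prod_Ico _ hM, norm_mul]
    have h2 : ‖(∏ n ∈ Finset.Ico N₂ M, f n z) - 1‖
        ≤ Real.exp (∑ n ∈ Finset.Ico N₂ M, v n) - 1 :=
      auxP_prod_sub_one_exp _ _ _
        (fun n hn => hb n (le_trans (le_max_right _ _) (Finset.mem_Ico.mp hn).1))
        (fun n _ => hv0 n)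
    have h3 : ∑ n ∈ Finset.Ico N₂ M, v n ≤ ∑' k, v (k + N₂) :=
      auxP_sum_Ico_le_tail v hv hv0 _ _
    have h4 : ‖(∏ n ∈ Finset.Ico N₂ M, f n z) - 1‖ ≤ 1/3 := by
      have := Real.exp_le_exp.mpr (le_of_lt (lt_of_le_of_lt h3 htail))
      linarith
    have h5 : (2/3 : ℝ) ≤ ‖∏ n ∈ Finset.Ico N₂ M, f n z‖ := by
      have := norm_sub_norm_le (1 : ℂ) (1 - ∏ n ∈ Finset.Ico N₂ M, f n z)
      have h6 : ‖(1 : ℂ) - ∏ n ∈ Finset.Ico N₂ M, f n z‖ ≤ 1/3 := by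
        rwa [norm_sub_rev] at h4
      simp only [sub_sub_cancel, norm_one] at this
      linarith
    rw [hc]
    exact mul_le_mul_of_nonneg_left h5 (norm_nonneg _)
  have : c ≤ ‖l‖ := ge_of_tendsto hl.norm hev
  intro h
  rw [h, norm_zero] at this
  linarith

/-- For an integer or half-integer `L ≥ −1/2` and reals `η_n` with
`√η_n = n − L + O(1/n)`, the infinite product
`G(λ) = −∏_{n<L}(η_n−λ) ∏_{n=L} π(η_n−λ) ∏_{n>L} (η_n−λ)/(n−L)²`
converges locally uniformly on `ℂ` and defines an entire function whose
zero set is exactly `{η_n : n ≥ 0}`. -/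
theorem stmt_8 (L : ℝ) (hL : ∃ m : ℤ, (m : ℝ) = 2 * L) (hL' : -(1/2 : ℝ) ≤ L)
    (η : ℕ → ℝ)
    (hasym : ∃ C : ℝ, ∀ᶠ n : ℕ in atTop,
      0 < η n ∧ |Real.sqrt (η n) - ((n : ℝ) - L)| ≤ C / n) :
    ∃ G : ℂ → ℂ, Differentiable ℂ G ∧
      TendstoLocallyUniformly
        (fun (N : ℕ) (z : ℂ) =>
          -∏ n ∈ Finset.range N,
            (if (n : ℝ) < L then ((η n : ℂ) - z)
             else if (n : ℝ) = L then (π : ℂ) * ((η n : ℂ) - z)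
             else ((η n : ℂ) - z) / (((n : ℝ) - L) : ℂ) ^ 2))
        G atTop ∧
      (∀ z : ℂ, G z = 0 ↔ ∃ n : ℕ, z = (η n : ℝ)) := by
  classical
  obtain ⟨C, hC⟩ := hasym
  obtain ⟨N₀, hN₀⟩ := eventually_atTop.mp hC
  set f : ℕ → ℂ → ℂ := fun n z =>
    if (n : ℝ) < L then ((η n : ℂ) - z)
    else if (n : ℝ) = L then (π : ℂ) * ((η n : ℂ) - z)
    else ((η n : ℂ) - z) / (((n : ℝ) - L) : ℂ) ^ 2 with hf
  set P : ℕ → ℂ → ℂ := fun N z => ∏ n ∈ Finset.range N, f n z with hP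
  set N₁ : ℕ := max (max N₀ 1) ⌈2 * L⌉₊ with hN₁def
  -- basic facts about n ≥ N₁
  have hN₁1 : 1 ≤ N₁ := le_trans (le_max_right N₀ 1) (le_max_left _ _)
  have hfacts : ∀ n : ℕ, N₁ ≤ n →
      (1:ℝ) ≤ n ∧ (n:ℝ)/2 ≤ (n:ℝ) - L ∧ L < (n:ℝ) ∧ 0 < η n ∧
      |Real.sqrt (η n) - ((n:ℝ) - L)| ≤ C / n := by
    intro n hn
    have h1 : 1 ≤ n := le_trans hN₁1 hn
    have hnR : (1:ℝ) ≤ n := by exact_mod_cast h1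
    have h2L : 2 * L ≤ (n:ℝ) := by
      have hcl : (⌈2 * L⌉₊ : ℝ) ≤ n := by
        exact_mod_cast le_trans (le_max_right (max N₀ 1) _) hn
      exact le_trans (Nat.le_ceil _) hcl
    have hN0 := hN₀ n (le_trans (le_trans (le_max_left N₀ 1) (le_max_left _ _)) hn)
    exact ⟨hnR, by linarith, by linarith, hN0.1, hN0.2⟩
  have hC0 : 0 ≤ C := by
    obtain ⟨hnR, _, _, _, habs⟩ := hfacts N₁ le_rfl
    have h1 : (0:ℝ) ≤ C / N₁ := le_trans (abs_nonneg _) habs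
    by_contra h
    push_neg at h
    have : C / (N₁ : ℝ) < 0 := div_neg_of_neg_of_pos h (by linarith)
    linarith
  set D : ℝ := C^2 + 3*C with hD
  have hD0 : 0 ≤ D := by nlinarith
  -- the key pointwise bound
  have hbound : ∀ n : ℕ, N₁ ≤ n → ∀ z : ℂ, ‖f n z - 1‖ ≤ (D + ‖z‖) * (4 / (n:ℝ)^2) := by
    intro n hn z
    obtain ⟨hnR, hm, hLlt, hηpos, happ⟩ := hfacts n hn
    set m : ℝ := (n:ℝ) - L with hmdef
    have hmpos : 0 < m := by simp only [hmdef]; linarith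
    have hbranch : f n z = ((η n : ℂ) - z) / ((m : ℂ))^2 := by
      simp only [hf]
      rw [if_neg (not_lt.mpr hLlt.le), if_neg hLlt.ne']
      rw [hmdef]; push_cast; ring
    have hmC : (m : ℂ) ≠ 0 := Complex.ofReal_ne_zero.mpr hmpos.ne'
    have hmC2 : ((m : ℂ))^2 ≠ 0 := pow_ne_zero _ hmC
    -- |η n - m^2| ≤ D
    set s : ℝ := Real.sqrt (η n) with hs
    have hs2 : s^2 = η n := Real.sq_sqrt hηpos.le
    have habs : |η n - m^2| ≤ D := by
      have h2 : η n - m^2 = (s - m) * (s + m) := by rw [← hs2]; ring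
      have hCn : 0 ≤ C / n := div_nonneg hC0 (by linarith)
      have h3 : |s + m| ≤ C/n + 2*m := by
        calc |s + m| = |(s - m) + 2*m| := by ring_nf
          _ ≤ |s - m| + |2*m| := abs_add_le _ _
          _ ≤ C/n + 2*m := by
              rw [abs_of_pos (by linarith : (0:ℝ) < 2*m)]
              exact add_le_add happ le_rfl
      have h4 : |s - m| * |s + m| ≤ (C/n) * (C/n + 2*m) :=
        mul_le_mul happ h3 (abs_nonneg _) hCn
      have hCnC : C / n ≤ C := div_le_self hC0 hnR
      have hmn : m ≤ (3/2) * n := by simp only [hmdef]; linarith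
      have h5 : (C/n) * m ≤ (3/2) * C := by
        rw [div_mul_eq_mul_div, div_le_iff₀ (by linarith : (0:ℝ) < n)]
        nlinarith
      have h6 : (C/n) * (C/n) ≤ C * C := mul_le_mul hCnC hCnC hCn hC0
      rw [h2, abs_mul]
      calc |s - m| * |s + m| ≤ (C/n) * (C/n + 2*m) := h4
        _ = (C/n)*(C/n) + 2*((C/n)*m) := by ring
        _ ≤ C*C + 2*((3/2)*C) := by linarith
        _ = D := by rw [hD]; ring
    -- norm estimate
    rw [hbranch, div_sub_one hmC2]
    rw [norm_div]
    have hnum : ‖(η n : ℂ) - z - (m:ℂ)^2‖ ≤ D + ‖z‖ := by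
      calc ‖(η n : ℂ) - z - (m:ℂ)^2‖ = ‖((η n : ℂ) - (m:ℂ)^2) - z‖ := by ring_nf
        _ ≤ ‖(η n : ℂ) - (m:ℂ)^2‖ + ‖z‖ := norm_sub_le _ _
        _ ≤ D + ‖z‖ := by
            have : (η n : ℂ) - (m:ℂ)^2 = ((η n - m^2 : ℝ) : ℂ) := by push_cast; ring
            rw [this, Complex.norm_real]
            exact add_le_add habs le_rfl
    have hden : ‖((m:ℂ))^2‖ = m^2 := by
      rw [norm_pow, Complex.norm_real, Real.norm_eq_abs, abs_of_pos hmpos]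
    rw [hden]
    have hm2 : (n:ℝ)^2 / 4 ≤ m^2 := by nlinarith
    have hnpos : (0:ℝ) < (n:ℝ)^2 / 4 := by positivity
    calc ‖(η n : ℂ) - z - (m:ℂ)^2‖ / m^2
        ≤ (D + ‖z‖) / ((n:ℝ)^2 / 4) := by
          exact div_le_div₀ (by positivity) hnum hnpos hm2
      _ = (D + ‖z‖) * (4 / (n:ℝ)^2) := by
          field_simp
  -- continuity and differentiability of factors
  have hcont : ∀ n, Continuous (f n) := by
    intro n
    simp only [hf]
    split_ifs with h1 h2
    · fun_prop
    · fun_prop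
    · exact (continuous_const.sub continuous_id).div_const _
  have hdiff : ∀ n, Differentiable ℂ (f n) := by
    intro n
    simp only [hf]
    split_ifs with h1 h2
    · exact (differentiable_const _).sub differentiable_id
    · exact ((differentiable_const _).sub differentiable_id).const_mul _
    · exact ((differentiable_const _).sub differentiable_id).div_const _
  have hPdiff : ∀ N, Differentiable ℂ (P N) := by
    intro N
    have := Differentiable.finset_prod (fun n (_ : n ∈ Finset.range N) => hdiff n)
    have heq : P N = ∏ i ∈ Finset.range N, f i := by
      ext z
      simp [hP, Finset.prod_apply]
    rw [heq]
    exact this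
  -- summability
  have hsum2 : Summable (fun n : ℕ => 4 / (n:ℝ)^2) := by
    have := (Real.summable_one_div_nat_pow (p := 2)).mpr one_lt_two
    have h4 := this.mul_left (4:ℝ)
    refine h4.congr fun n => ?_
    rw [mul_one_div]
  have hv : ∀ R : ℝ, Summable (fun n : ℕ => (D + R) * (4 / (n:ℝ)^2)) :=
    fun R => hsum2.mul_left _
  have hv0 : ∀ R : ℝ, 0 ≤ R → ∀ n : ℕ, 0 ≤ (D + R) * (4 / (n:ℝ)^2) := by
    intro R hR n; positivity
  -- uniform Cauchy on closed balls
  have hUC : ∀ R : ℝ, 0 ≤ R → UniformCauchySeqOn P atTop (Metric.closedBall 0 R) := by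
    intro R hR
    refine auxP_cauchy f _ (hv R) (hv0 R hR) N₁ _ (isCompact_closedBall 0 R) hcont ?_
    intro n hn z hz
    refine (hbound n hn z).trans ?_
    have hzR : ‖z‖ ≤ R := by
      rwa [Metric.mem_closedBall, dist_zero_right] at hz
    have : (0:ℝ) ≤ 4 / (n:ℝ)^2 := by positivity
    exact mul_le_mul_of_nonneg_right (by linarith) this
  -- pointwise limit
  have hcauchy : ∀ z : ℂ, CauchySeq (fun N => P N z) := by
    intro z
    rw [Metric.cauchySeq_iff]
    intro ε hε
    obtain ⟨N, hN⟩ := Metric.uniformCauchySeqOn_iff.mp (hUC ‖z‖ (norm_nonneg z)) ε hε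
    exact ⟨N, fun m hm n hn => hN m hm n hn z (by simp)⟩
  have hconv : ∀ z : ℂ, ∃ l : ℂ, Tendsto (fun N => P N z) atTop (𝓝 l) :=
    fun z => cauchySeq_tendsto_of_complete (hcauchy z)
  choose g hg using hconv
  -- locally uniform convergence of P to g
  have hTLU : TendstoLocallyUniformly P g atTop := by
    rw [tendstoLocallyUniformly_iff_forall_isCompact]
    intro K hK
    obtain ⟨R, hR⟩ := (Metric.isBounded_iff_subset_closedBall 0).mp hK.isBounded
    have hsub : K ⊆ Metric.closedBall 0 (max R 0) :=
      hR.trans (Metric.closedBall_subset_closedBall (le_max_left _ _))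
    exact ((hUC (max R 0) (le_max_right _ _)).mono hsub).tendstoUniformlyOn_of_tendsto
      fun x _ => hg x
  have hTLUneg : TendstoLocallyUniformly (fun N z => -P N z) (fun z => -g z) atTop := by
    rw [tendstoLocallyUniformly_iff_forall_isCompact] at hTLU ⊢
    intro K hK
    have := hTLU K hK
    rw [Metric.tendstoUniformlyOn_iff] at this ⊢
    intro ε hε
    filter_upwards [this ε hε] with N hN z hz
    simpa [dist_neg_neg] using hN z hz
  -- differentiability of g
  have hgdiff : Differentiable ℂ g := by
    rw [← differentiableOn_univ]
    refine TendstoLocallyUniformlyOn.differentiableOn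
      (tendstoLocallyUniformlyOn_univ.mpr hTLU)
      (Eventually.of_forall fun N => (hPdiff N).differentiableOn) isOpen_univ
  -- factors vanish exactly at η n
  have hfzero : ∀ n : ℕ, f n ((η n : ℝ) : ℂ) = 0 := by
    intro n
    simp only [hf]
    split_ifs with h1 h2 <;> simp
  have hfne : ∀ (z : ℂ), (∀ n : ℕ, z ≠ ((η n : ℝ) : ℂ)) → ∀ n, f n z ≠ 0 := by
    intro z hz n
    have hsub : (η n : ℂ) - z ≠ 0 := sub_ne_zero.mpr (Ne.symm (hz n))
    simp only [hf]
    split_ifs with h1 h2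
    · exact hsub
    · exact mul_ne_zero (Complex.ofReal_ne_zero.mpr Real.pi_ne_zero) hsub
    · refine div_ne_zero hsub (pow_ne_zero _ ?_)
      exact_mod_cast sub_ne_zero.mpr (h2 : (n:ℝ) ≠ L)
  refine ⟨fun z => -g z, hgdiff.neg, hTLUneg, ?_⟩
  intro z
  rw [neg_eq_zero]
  constructor
  · intro hgz
    by_contra h
    push_neg at h
    have hnz : ∀ n, f n z ≠ 0 := hfne z h
    exact (auxP_ne_zero f _ (hv ‖z‖) (hv0 ‖z‖ (norm_nonneg z)) N₁ z
      (fun n hn => hbound n hn z) hnz (g z) (hg z)) hgz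
  · rintro ⟨n, rfl⟩
    have hev : ∀ᶠ N in atTop, P N ((η n : ℝ) : ℂ) = 0 := by
      rw [eventually_atTop]
      refine ⟨n + 1, fun N hN => ?_⟩
      exact Finset.prod_eq_zero (Finset.mem_range.mpr hN) (hfzero n)
    have h2 : Tendsto (fun N => P N ((η n : ℝ) : ℂ)) atTop (𝓝 0) :=
      Tendsto.congr' (hev.mono fun N h => h.symm) tendsto_const_nhds
    exact tendsto_nhds_unique (hg _) h2
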